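/- Let m = n+1 with λ₁ > ... > λ_m > 0. For every convex combination α* = ∑_{i=1}^m c_i α_{(τ_i)} with c_i > 0 and ∑ c_i = 1, where τ_i = {1,...,m}\{i}, there exists ψ ∈ ℝ^m with strictly positive entries (namely ψ_i = π_{τ_i}/c_i after normalization) such that α(ψ) = α*. Hence the closure of the image of α equals the convex hull of {α_{(τ_i)} : i = 1,...,m}. -/

import Mathlib

open Finset Matrix

/-- `(a,b)` entry `λ_{τ(a)}^{b+1}`: the matrix `S_τᵀ Λ V`. -/
noncomputable def selLV {m : ℕ} (l : Fin m → ℝ) (n : ℕ) (τ : Finset (Fin m))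
    (h : τ.card = n) : Matrix (Fin n) (Fin n) ℝ :=
  Matrix.of fun a b => l (τ.orderEmbOfFin h a) ^ ((b : ℕ) + 1)

/-- The extreme coefficient vector `α_{(τ)} = (S_τᵀ Λ V)⁻¹ 𝟙`. -/
noncomputable def alphaTau {m : ℕ} (l : Fin m → ℝ) (n : ℕ) (τ : Finset (Fin m))
    (h : τ.card = n) : Fin n → ℝ :=
  (selLV l n τ h)⁻¹ *ᵥ (fun _ => 1)

/-- The matrix `Vᵀ Ψ Λ V`, with `(a,b)` entry `∑ i, λ_i^a ψ_i λ_i^{b+1}`. -/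
noncomputable def Bmat {m : ℕ} (l ψ : Fin m → ℝ) (n : ℕ) : Matrix (Fin n) (Fin n) ℝ :=
  Matrix.of fun a b => ∑ i : Fin m, l i ^ (a : ℕ) * ψ i * l i ^ ((b : ℕ) + 1)

/-- The coefficient map `α(ψ) = (Vᵀ Ψ Λ V)⁻¹ Vᵀ ψ`. -/
noncomputable def alphaMap {m : ℕ} (l ψ : Fin m → ℝ) (n : ℕ) : Fin n → ℝ :=
  (Bmat l ψ n)⁻¹ *ᵥ (fun a => ∑ i : Fin m, l i ^ (a : ℕ) * ψ i)

/-- The shrinkage vector `ω(ψ) = Λ V α(ψ)`. -/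
noncomputable def omegaMap {m : ℕ} (l ψ : Fin m → ℝ) (n : ℕ) : Fin m → ℝ :=
  fun i => ∑ j : Fin n, l i ^ ((j : ℕ) + 1) * alphaMap l ψ n j

/-- The relative residual vector `z(ψ) = 𝟙 - ω(ψ)`. -/
noncomputable def zMap {m : ℕ} (l ψ : Fin m → ℝ) (n : ℕ) : Fin m → ℝ :=
  fun i => 1 - omegaMap l ψ n i

/-- `ψ^τ = ∏_{i∈τ} ψ_i`. -/
def psiPow {m : ℕ} (ψ : Fin m → ℝ) (τ : Finset (Fin m)) : ℝ := ∏ i ∈ τ, ψ i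

/-- `π_τ = (∏_{j∈τ} λ_j) ∏_{j<i∈τ} (λ_i - λ_j)²`. -/
def piTau {m : ℕ} (l : Fin m → ℝ) (τ : Finset (Fin m)) : ℝ :=
  (∏ j ∈ τ, l j) * ∏ j ∈ τ, ∏ i ∈ τ.filter (fun x => j < x), (l i - l j) ^ 2

/-- The number of nonzero entries of a vector. -/
noncomputable def suppCard {m : ℕ} (ψ : Fin m → ℝ) : ℕ :=
  ({i : Fin m | ψ i ≠ 0}).ncard



namespace S4
section
variable {m n : ℕ}

lemma selLV_det (l : Fin m → ℝ) (τ : Finset (Fin m)) (h : τ.card = n) :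
    (selLV l n τ h).det = (∏ a : Fin n, l (τ.orderEmbOfFin h a)) *
      ∏ i : Fin n, ∏ j ∈ Ioi i, (l (τ.orderEmbOfFin h j) - l (τ.orderEmbOfFin h i)) := by
  have : selLV l n τ h =
      Matrix.diagonal (fun a => l (τ.orderEmbOfFin h a)) *
        Matrix.vandermonde (fun a => l (τ.orderEmbOfFin h a)) := by
    ext a b
    simp [selLV, Matrix.vandermonde, Matrix.diagonal_mul, pow_succ, mul_comm]
  rw [this, Matrix.det_mul, Matrix.det_diagonal, Matrix.det_vandermonde]

lemma selLV_det_ne (l : Fin m → ℝ) (hpos : ∀ i, 0 < l i) (hinj : Function.Injective l)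
    (τ : Finset (Fin m)) (h : τ.card = n) : (selLV l n τ h).det ≠ 0 := by
  rw [selLV_det]
  refine mul_ne_zero (Finset.prod_ne_zero_iff.2 fun a _ => (hpos _).ne') ?_
  refine Finset.prod_ne_zero_iff.2 fun i _ => Finset.prod_ne_zero_iff.2 fun j hj => ?_
  have hij : i < j := Finset.mem_Ioi.1 hj
  have : τ.orderEmbOfFin h i ≠ τ.orderEmbOfFin h j :=
    fun e => (hij.ne (((τ.orderEmbOfFin h).injective e))).elim
  exact sub_ne_zero.2 fun e => this ((hinj e.symm).symm ▸ rfl)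

lemma alphaTau_omega (l : Fin m → ℝ) (hpos : ∀ i, 0 < l i) (hinj : Function.Injective l)
    (τ : Finset (Fin m)) (h : τ.card = n) {i : Fin m} (hi : i ∈ τ) :
    ∑ b : Fin n, l i ^ ((b : ℕ) + 1) * alphaTau l n τ h b = 1 := by
  obtain ⟨a, rfl⟩ : ∃ a, τ.orderEmbOfFin h a = i := by
    have h2 : (i : Fin m) ∈ Set.range (τ.orderEmbOfFin h) := by
      rw [Finset.range_orderEmbOfFin]; exact hi
    exact h2
  have hdet := selLV_det_ne l hpos hinj τ h
  have hmul : selLV l n τ h *ᵥ alphaTau l n τ h = fun _ => 1 := by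
    rw [alphaTau, Matrix.mulVec_mulVec, Matrix.mul_nonsing_inv _ (isUnit_iff_ne_zero.2 hdet), Matrix.one_mulVec]
  have := congrFun hmul a
  simpa [Matrix.mulVec, dotProduct, selLV] using this

lemma erase_card (k : Fin (n+1)) : ((Finset.univ : Finset (Fin (n+1))).erase k).card = n := by
  simp [Finset.card_erase_of_mem]

lemma emb_erase (k : Fin (n+1)) :
    ⇑(((Finset.univ : Finset (Fin (n+1))).erase k).orderEmbOfFin (erase_card k)) = k.succAbove :=
  (Finset.orderEmbOfFin_unique (erase_card k)
    (fun x => Finset.mem_erase.2 ⟨Fin.succAbove_ne k x, Finset.mem_univ _⟩)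
    (Fin.strictMono_succAbove k)).symm

lemma erase_eq_image (k : Fin (n+1)) :
    (Finset.univ : Finset (Fin (n+1))).erase k = Finset.image k.succAbove Finset.univ := by
  ext i
  simp only [Finset.mem_erase, Finset.mem_univ, and_true, Finset.mem_image, true_and]
  constructor
  · intro hi
    obtain ⟨j, hj⟩ := Fin.exists_succAbove_eq hi
    exact ⟨j, hj⟩
  · rintro ⟨j, -, rfl⟩; exact Fin.succAbove_ne k j

lemma filter_erase (k : Fin (n+1)) (a : Fin n) :
    ((Finset.univ : Finset (Fin (n+1))).erase k).filter (fun x => k.succAbove a < x) =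
      Finset.image k.succAbove (Finset.Ioi a) := by
  ext i
  simp only [Finset.mem_filter, Finset.mem_erase, Finset.mem_univ, and_true, true_and,
    Finset.mem_image, Finset.mem_Ioi]
  constructor
  · rintro ⟨hik, hlt⟩
    obtain ⟨j, rfl⟩ := Fin.exists_succAbove_eq hik
    exact ⟨j, (Fin.succAbove_lt_succAbove_iff).1 hlt, rfl⟩
  · rintro ⟨j, hj, rfl⟩
    exact ⟨Fin.succAbove_ne k j, (Fin.succAbove_lt_succAbove_iff).2 hj⟩

noncomputable def DD (l : Fin (n+1) → ℝ) (k : Fin (n+1)) : ℝ :=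
  ∏ i : Fin n, ∏ j ∈ Ioi i, (l (k.succAbove j) - l (k.succAbove i))

lemma piTau_erase (l : Fin (n+1) → ℝ) (k : Fin (n+1)) :
    piTau l (Finset.univ.erase k) = (∏ a : Fin n, l (k.succAbove a)) * (DD l k) ^ 2 := by
  have hinj := Fin.succAbove_right_injective (p := k)
  rw [piTau, erase_eq_image k]
  rw [Finset.prod_image (fun a _ b _ h => hinj h), Finset.prod_image (fun a _ b _ h => hinj h)]
  congr 1
  rw [DD, ← Finset.prod_pow]
  refine Finset.prod_congr rfl fun a _ => ?_
  rw [← erase_eq_image k, filter_erase k a, Finset.prod_image (fun x _ y _ h => hinj h),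
    ← Finset.prod_pow]

lemma vanish (l : Fin (n+1) → ℝ) (a : Fin n) :
    ∑ k : Fin (n+1), (-1 : ℝ)^(k:ℕ) * DD l k * l k ^ (a:ℕ) = 0 := by
  classical
  set N : Matrix (Fin (n+1)) (Fin (n+1)) ℝ :=
    Matrix.of (fun i j => Fin.lastCases (l i ^ (a:ℕ)) (fun j' => l i ^ (j':ℕ)) j) with hN
  have h0 : N.det = 0 := by
    refine Matrix.det_zero_of_column_eq (i := Fin.castSucc a) (j := Fin.last n)
      (Fin.castSucc_lt_last a).ne (fun r => ?_)
    simp [hN]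
  have h1 : N.det = ∑ i : Fin (n+1), (-1 : ℝ)^((i:ℕ)+n) * l i ^ (a:ℕ) * DD l i := by
    rw [Matrix.det_succ_column N (Fin.last n)]
    refine Finset.sum_congr rfl fun i _ => ?_
    have hsub : (N.submatrix i.succAbove (Fin.last n).succAbove) =
        Matrix.vandermonde (fun r => l (i.succAbove r)) := by
      ext r c
      simp [hN, Fin.succAbove_last, Matrix.vandermonde]
    rw [hsub, Matrix.det_vandermonde]
    simp only [hN, Matrix.of_apply, Fin.lastCases_last, Fin.val_last, DD]
  have hsq : ((-1:ℝ)^n) * ((-1:ℝ)^n) = 1 := by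
    rw [← pow_add]; exact Even.neg_one_pow ⟨n, rfl⟩
  have h2 : ∑ k : Fin (n+1), (-1 : ℝ)^(k:ℕ) * DD l k * l k ^ (a:ℕ) =
      (-1:ℝ)^n * ∑ i : Fin (n+1), (-1 : ℝ)^((i:ℕ)+n) * l i ^ (a:ℕ) * DD l i := by
    rw [Finset.mul_sum]
    refine Finset.sum_congr rfl fun i _ => ?_
    rw [pow_add]
    linear_combination (-((-1:ℝ)^(i:ℕ) * DD l i * l i ^ (a:ℕ))) * hsq
  rw [h2, ← h1, h0, mul_zero]

noncomputable def MM (l : Fin (n+1) → ℝ) : Matrix (Fin (n+1)) (Fin (n+1)) ℝ :=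
  Matrix.of fun i => Fin.cons 1 (fun b => l i ^ ((b:ℕ)+1))

noncomputable def zz (l : Fin (n+1) → ℝ) (k : Fin (n+1)) : ℝ :=
  1 - ∑ b : Fin n, l k ^ ((b:ℕ)+1) * alphaTau l n (Finset.univ.erase k) (erase_card k) b

lemma z_mul_det (l : Fin (n+1) → ℝ) (hpos : ∀ i, 0 < l i) (hinj : Function.Injective l)
    (k : Fin (n+1)) :
    zz l k * ((-1 : ℝ)^(k:ℕ) * (selLV l n (Finset.univ.erase k) (erase_card k)).det)
      = (MM l).det := by
  classical
  set α := alphaTau l n (Finset.univ.erase k) (erase_card k) with hα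
  set c : Fin (n+1) → ℝ := Fin.cons 1 (fun b => - α b) with hc
  have hMc : MM l *ᵥ c = zz l k • (Pi.single k 1 : Fin (n+1) → ℝ) := by
    funext i
    have hval : (MM l *ᵥ c) i = 1 - ∑ b : Fin n, l i ^ ((b:ℕ)+1) * α b := by
      simp only [MM, Matrix.mulVec, dotProduct, Matrix.of_apply, hc, Fin.sum_univ_succ,
        Fin.cons_zero, Fin.cons_succ, mul_one, mul_neg, one_mul, Finset.sum_neg_distrib]
      ring
    by_cases hik : i = k
    · subst hik
      simp [hval, zz, Pi.single_apply, hα]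
    · have hi : i ∈ Finset.univ.erase k := Finset.mem_erase.2 ⟨hik, Finset.mem_univ _⟩
      have := alphaTau_omega l hpos hinj _ (erase_card k) hi
      rw [← hα] at this
      simp [hval, this, Pi.single_apply, hik]
  have h1 : (MM l).adjugate *ᵥ (MM l *ᵥ c) = (MM l).det • c := by
    rw [Matrix.mulVec_mulVec, Matrix.adjugate_mul, Matrix.smul_mulVec, Matrix.one_mulVec]
  rw [hMc] at h1
  have h0 := congrFun h1 0
  have hL : ((MM l).adjugate *ᵥ (zz l k • (Pi.single k 1 : Fin (n+1) → ℝ))) 0 = zz l k * (MM l).adjugate 0 k := by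
    simp [Matrix.mulVec, dotProduct, Pi.single_apply, mul_ite, Finset.sum_ite_eq']
    ring
  have hR : ((MM l).det • c) 0 = (MM l).det := by simp [hc]
  have hadj : (MM l).adjugate 0 k =
      (-1 : ℝ)^(k:ℕ) * (selLV l n (Finset.univ.erase k) (erase_card k)).det := by
    rw [Matrix.adjugate_apply, Matrix.det_succ_row _ k]
    rw [Finset.sum_eq_single 0]
    · have hsub : ((MM l).updateRow k (Pi.single 0 1)).submatrix k.succAbove
          (Fin.succAbove 0) = selLV l n (Finset.univ.erase k) (erase_card k) := by
        ext r c'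
        rw [Matrix.submatrix_apply, Matrix.updateRow_ne (Fin.succAbove_ne k r)]
        simp [MM, Fin.zero_succAbove, selLV, emb_erase]
      rw [hsub]
      simp
    · intro j _ hj
      rw [Matrix.updateRow_self]
      simp [Pi.single_apply, hj.symm]  -- single 0 1 j = 0 since j ≠ 0
    · intro h; exact absurd (Finset.mem_univ 0) h
  rw [hL, hR, hadj] at h0
  exact h0

lemma vandermonde_det_ne (x : Fin n → ℝ) (hx : Function.Injective x) :
    (Matrix.vandermonde x).det ≠ 0 := by
  rw [Matrix.det_vandermonde]
  refine Finset.prod_ne_zero_iff.2 fun i _ => Finset.prod_ne_zero_iff.2 fun j hj => ?_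
  exact sub_ne_zero.2 fun e => ((Finset.mem_Ioi.1 hj).ne (hx e.symm)).elim

lemma Bmat_det_ne (l ψ : Fin m → ℝ) (hpos : ∀ i, 0 < l i) (hinj : Function.Injective l)
    (hψ : ∀ i, 0 ≤ ψ i) (hsupp : n ≤ suppCard ψ) : (Bmat l ψ n).det ≠ 0 := by
  classical
  intro hdet
  obtain ⟨v, hv0, hv⟩ := (Matrix.exists_mulVec_eq_zero_iff).2 hdet
  -- Gram factorization
  set A : Matrix (Fin m) (Fin n) ℝ :=
    Matrix.of (fun i a => Real.sqrt (ψ i * l i) * l i ^ (a : ℕ)) with hA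
  have hBA : Bmat l ψ n = Aᵀ * A := by
    ext a b
    simp only [Bmat, Matrix.of_apply, Matrix.mul_apply, Matrix.transpose_apply, hA]
    refine Finset.sum_congr rfl fun i _ => ?_
    have h1 : Real.sqrt (ψ i * l i) * Real.sqrt (ψ i * l i) = ψ i * l i :=
      Real.mul_self_sqrt (mul_nonneg (hψ i) (hpos i).le)
    calc l i ^ (a:ℕ) * ψ i * l i ^ ((b:ℕ)+1)
        = (ψ i * l i) * (l i ^ (a:ℕ) * l i ^ (b:ℕ)) := by rw [pow_succ]; ring
      _ = _ := by linear_combination (l i ^ (a:ℕ) * l i ^ (b:ℕ)) * h1.symm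
  have hquad : (A *ᵥ v) ⬝ᵥ (A *ᵥ v) = 0 := by
    have : v ⬝ᵥ (Bmat l ψ n *ᵥ v) = 0 := by rw [hv, dotProduct_zero]
    rw [hBA, ← Matrix.mulVec_mulVec, Matrix.dotProduct_mulVec, Matrix.vecMul_transpose] at this
    exact this
  have hAv : A *ᵥ v = 0 := by
    funext i
    have hsum : ∑ i, (A *ᵥ v) i ^ 2 = 0 := by
      rw [← hquad]; simp [dotProduct, sq]
    have := (Finset.sum_eq_zero_iff_of_nonneg (fun i _ => sq_nonneg ((A *ᵥ v) i))).1 hsum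
      i (Finset.mem_univ i)
    exact pow_eq_zero_iff (n := 2) (by norm_num) |>.1 this
  -- roots of the polynomial
  have hroot : ∀ i, ψ i ≠ 0 → ∑ b : Fin n, l i ^ (b : ℕ) * v b = 0 := by
    intro i hi
    have h0 := congrFun hAv i
    have hsqrt : 0 < Real.sqrt (ψ i * l i) :=
      Real.sqrt_pos.2 (mul_pos ((hψ i).lt_of_ne (Ne.symm hi)) (hpos i))
    have : Real.sqrt (ψ i * l i) * ∑ b : Fin n, l i ^ (b : ℕ) * v b = 0 := by
      rw [Finset.mul_sum]
      simpa [hA, Matrix.mulVec, dotProduct, mul_assoc, mul_comm, mul_left_comm]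
        using h0
    rcases mul_eq_zero.1 this with h | h
    · exact absurd h hsqrt.ne'
    · exact h
  -- choose n points in the support
  have hF : n ≤ (Finset.univ.filter (fun i : Fin m => ψ i ≠ 0)).card := by
    have : suppCard ψ = (Finset.univ.filter (fun i : Fin m => ψ i ≠ 0)).card := by
      rw [suppCard, ← Set.ncard_coe_finset]
      congr 1
      ext i; simp
    omega
  obtain ⟨τ, hτsub, hτ⟩ := Finset.exists_subset_card_eq hF
  set x : Fin n → ℝ := fun a => l (τ.orderEmbOfFin hτ a) with hx
  have hxinj : Function.Injective x := fun a b hab => (τ.orderEmbOfFin hτ).injective (hinj hab)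
  have hvand : Matrix.vandermonde x *ᵥ v = 0 := by
    funext r
    have hmem : (τ.orderEmbOfFin hτ r) ∈ Finset.univ.filter (fun i : Fin m => ψ i ≠ 0) :=
      hτsub (Finset.orderEmbOfFin_mem τ hτ r)
    have := hroot _ (Finset.mem_filter.1 hmem).2
    simpa [Matrix.mulVec, dotProduct, Matrix.vandermonde, hx] using this
  have : (Matrix.vandermonde x).det = 0 :=
    Matrix.exists_mulVec_eq_zero_iff.1 ⟨v, hv0, hvand⟩
  exact vandermonde_det_ne x hxinj this

lemma DD_ne (l : Fin (n+1) → ℝ) (hinj : Function.Injective l) (k : Fin (n+1)) :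
    DD l k ≠ 0 := by
  refine Finset.prod_ne_zero_iff.2 fun i _ => Finset.prod_ne_zero_iff.2 fun j hj => ?_
  refine sub_ne_zero.2 fun e => ?_
  exact (Finset.mem_Ioi.1 hj).ne' (Fin.succAbove_right_injective (hinj e))

lemma selLV_det_erase (l : Fin (n+1) → ℝ) (k : Fin (n+1)) :
    (selLV l n (Finset.univ.erase k) (erase_card k)).det
      = (∏ a : Fin n, l (k.succAbove a)) * DD l k := by
  rw [selLV_det, emb_erase, DD]

lemma piTau_erase_pos (l : Fin (n+1) → ℝ) (hpos : ∀ i, 0 < l i)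
    (hinj : Function.Injective l) (k : Fin (n+1)) :
    0 < piTau l (Finset.univ.erase k) := by
  rw [piTau_erase]
  have := DD_ne l hinj k
  have h2 : 0 < (DD l k)^2 := by positivity
  exact mul_pos (Finset.prod_pos fun a _ => hpos _) h2

lemma piTau_zz (l : Fin (n+1) → ℝ) (hpos : ∀ i, 0 < l i)
    (hinj : Function.Injective l) (k : Fin (n+1)) :
    piTau l (Finset.univ.erase k) * zz l k = (-1 : ℝ)^(k:ℕ) * DD l k * (MM l).det := by
  have hz := z_mul_det l hpos hinj k
  rw [selLV_det_erase] at hz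
  have hk2 : ((-1:ℝ)^(k:ℕ))*((-1:ℝ)^(k:ℕ)) = 1 := by
    rw [← pow_add]; exact Even.neg_one_pow ⟨(k:ℕ), rfl⟩
  rw [piTau_erase]
  linear_combination ((-1:ℝ)^(k:ℕ) * DD l k) * hz
    - ((∏ a : Fin n, l (k.succAbove a)) * (DD l k)^2 * zz l k) * hk2
end
section
variable {n : ℕ}

lemma exists_good_k (ψ : Fin (n+1) → ℝ) (hsupp : n ≤ suppCard ψ) :
    ∃ k0 : Fin (n+1), ∀ i, i ≠ k0 → ψ i ≠ 0 := by
  classical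
  set F := Finset.univ.filter (fun i : Fin (n+1) => ψ i ≠ 0) with hF
  have hcard : n ≤ F.card := by
    have : suppCard ψ = F.card := by
      rw [suppCard, ← Set.ncard_coe_finset]
      congr 1
      ext i; simp [hF]
    omega
  by_cases hFu : F = Finset.univ
  · refine ⟨0, fun i _ => ?_⟩
    have : i ∈ F := hFu.symm ▸ Finset.mem_univ i
    exact (Finset.mem_filter.1 this).2
  · obtain ⟨k0, hk0⟩ : ∃ k0, k0 ∉ F := by
      by_contra hc
      push_neg at hc
      exact hFu (Finset.eq_univ_iff_forall.2 hc)
    refine ⟨k0, fun i hi => ?_⟩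
    have hsub : F ⊆ Finset.univ.erase k0 := fun x hx =>
      Finset.mem_erase.2 ⟨fun e => hk0 (e ▸ hx), Finset.mem_univ _⟩
    have : F = Finset.univ.erase k0 :=
      Finset.eq_of_subset_of_card_le hsub (by rw [erase_card k0]; omega)
    have hiF : i ∈ F := this ▸ Finset.mem_erase.2 ⟨hi, Finset.mem_univ _⟩
    exact (Finset.mem_filter.1 hiF).2

lemma repr_main (l ψ : Fin (n+1) → ℝ) (hpos : ∀ i, 0 < l i) (hinj : Function.Injective l)
    (hψ : ∀ i, 0 ≤ ψ i) (hsupp : n ≤ suppCard ψ) :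
    0 < (∑ k, psiPow ψ (Finset.univ.erase k) * piTau l (Finset.univ.erase k)) ∧
    alphaMap l ψ n = ∑ k, ((psiPow ψ (Finset.univ.erase k) * piTau l (Finset.univ.erase k)) /
        (∑ k', psiPow ψ (Finset.univ.erase k') * piTau l (Finset.univ.erase k'))) •
        alphaTau l n (Finset.univ.erase k) (erase_card k) := by
  classical
  set w : Fin (n+1) → ℝ :=
    fun k => psiPow ψ (Finset.univ.erase k) * piTau l (Finset.univ.erase k) with hw
  set P : ℝ := ∑ k, w k with hP
  have hw0 : ∀ k, 0 ≤ w k := fun k =>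
    mul_nonneg (Finset.prod_nonneg fun i _ => hψ i) (piTau_erase_pos l hpos hinj k).le
  have hPpos : 0 < P := by
    obtain ⟨k0, hk0⟩ := exists_good_k ψ hsupp
    refine Finset.sum_pos' (fun k _ => hw0 k) ⟨k0, Finset.mem_univ _, ?_⟩
    refine mul_pos (Finset.prod_pos fun i hi => ?_) (piTau_erase_pos l hpos hinj k0)
    exact (hψ i).lt_of_ne (Ne.symm (hk0 i (Finset.mem_erase.1 hi).1))
  refine ⟨hPpos, ?_⟩
  set α : Fin (n+1) → Fin n → ℝ :=
    fun k => alphaTau l n (Finset.univ.erase k) (erase_card k) with hα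
  -- B *ᵥ α_k
  have hBα : ∀ k, ∀ a : Fin n, (Bmat l ψ n *ᵥ α k) a =
      (∑ i, l i ^ (a:ℕ) * ψ i) - l k ^ (a:ℕ) * ψ k * zz l k := by
    intro k a
    have h1 : (Bmat l ψ n *ᵥ α k) a =
        ∑ i, l i ^ (a:ℕ) * ψ i * (∑ b : Fin n, l i ^ ((b:ℕ)+1) * α k b) := by
      simp only [Matrix.mulVec, dotProduct, Bmat, Matrix.of_apply, Finset.sum_mul]
      rw [Finset.sum_comm]
      refine Finset.sum_congr rfl fun i _ => ?_
      rw [Finset.mul_sum]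
      refine Finset.sum_congr rfl fun b _ => by ring
    rw [h1, ← Finset.sum_erase_add _ _ (Finset.mem_univ k)]
    have h2 : ∀ i ∈ Finset.univ.erase k,
        l i ^ (a:ℕ) * ψ i * (∑ b : Fin n, l i ^ ((b:ℕ)+1) * α k b) = l i ^ (a:ℕ) * ψ i := by
      intro i hi
      rw [hα, alphaTau_omega l hpos hinj _ _ hi, mul_one]
    rw [Finset.sum_congr rfl h2]
    have h3 : (∑ b : Fin n, l k ^ ((b:ℕ)+1) * α k b) = 1 - zz l k := by
      rw [zz, hα]; ring
    rw [h3, ← Finset.sum_erase_add _ (fun i => l i ^ (a:ℕ) * ψ i) (Finset.mem_univ k)]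
    ring
  -- the combination
  have hT : Bmat l ψ n *ᵥ (∑ k, (w k / P) • α k) = fun a : Fin n => ∑ i, l i ^ (a:ℕ) * ψ i := by
    funext a
    have hswap : (Bmat l ψ n *ᵥ (∑ k, (w k / P) • α k)) a =
        ∑ k, (w k / P) * (Bmat l ψ n *ᵥ α k) a := by
      simp only [Matrix.mulVec, dotProduct, Finset.sum_apply, Pi.smul_apply,
        smul_eq_mul, Finset.mul_sum]
      rw [Finset.sum_comm]
      exact Finset.sum_congr rfl fun k _ => Finset.sum_congr rfl fun b _ => by ring
    rw [hswap]
    have hsplit : ∑ k, (w k / P) * (Bmat l ψ n *ᵥ α k) a =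
        (∑ k, (w k / P)) * (∑ i, l i ^ (a:ℕ) * ψ i)
          - (1/P) * ∑ k, w k * ψ k * zz l k * l k ^ (a:ℕ) := by
      rw [Finset.sum_mul, Finset.mul_sum, ← Finset.sum_sub_distrib]
      refine Finset.sum_congr rfl fun k _ => ?_
      rw [hBα k a]
      ring
    rw [hsplit]
    have hsum1 : (∑ k, (w k / P)) = 1 := by
      rw [← Finset.sum_div, ← hP, div_self hPpos.ne']
    have hzero : ∑ k, w k * ψ k * zz l k * l k ^ (a:ℕ) = 0 := by
      have hterm : ∀ k, w k * ψ k * zz l k * l k ^ (a:ℕ) =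
          (∏ i, ψ i) * (MM l).det * ((-1:ℝ)^(k:ℕ) * DD l k * l k ^ (a:ℕ)) := by
        intro k
        have hprod : psiPow ψ (Finset.univ.erase k) * ψ k = ∏ i, ψ i :=
          Finset.prod_erase_mul _ _ (Finset.mem_univ k)
        have hpz := piTau_zz l hpos hinj k
        calc w k * ψ k * zz l k * l k ^ (a:ℕ)
            = (psiPow ψ (Finset.univ.erase k) * ψ k) *
              (piTau l (Finset.univ.erase k) * zz l k) * l k ^ (a:ℕ) := by rw [hw]; ring
          _ = (∏ i, ψ i) * ((-1:ℝ)^(k:ℕ) * DD l k * (MM l).det) * l k ^ (a:ℕ) := by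
              rw [hprod, hpz]
          _ = _ := by ring
      rw [Finset.sum_congr rfl fun k _ => hterm k, ← Finset.mul_sum, vanish l a, mul_zero]
    rw [hsum1, hzero, one_mul, mul_zero, sub_zero]
  -- invert
  have hdet := Bmat_det_ne l ψ hpos hinj hψ hsupp
  rw [alphaMap, ← hT, Matrix.mulVec_mulVec, Matrix.nonsing_inv_mul _ (isUnit_iff_ne_zero.2 hdet),
    Matrix.one_mulVec]

lemma suppCard_of_pos (ψ : Fin (n+1) → ℝ) (h : ∀ i, 0 < ψ i) : suppCard ψ = n + 1 := by
  rw [suppCard]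
  have : {i : Fin (n+1) | ψ i ≠ 0} = Set.univ := by
    ext i; simp [(h i).ne']
  rw [this, Set.ncard_univ, Nat.card_eq_fintype_card, Fintype.card_fin]

lemma part1 (l : Fin (n+1) → ℝ) (hpos : ∀ i, 0 < l i) (hinj : Function.Injective l)
    (c : Fin (n+1) → ℝ) (hc : ∀ i, 0 < c i) (hc1 : ∑ i, c i = 1) :
    ∃ ψ : Fin (n+1) → ℝ, (∀ i, 0 < ψ i) ∧
      alphaMap l ψ n = ∑ k, c k • alphaTau l n (Finset.univ.erase k) (erase_card k) := by
  classical
  set ψ : Fin (n+1) → ℝ := fun i => piTau l (Finset.univ.erase i) / c i with hψdef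
  have hψpos : ∀ i, 0 < ψ i := fun i => div_pos (piTau_erase_pos l hpos hinj i) (hc i)
  have hsupp : n ≤ suppCard ψ := by rw [suppCard_of_pos ψ hψpos]; omega
  obtain ⟨hP, hrepr⟩ := repr_main l ψ hpos hinj (fun i => (hψpos i).le) hsupp
  set Q : ℝ := ∏ i, piTau l (Finset.univ.erase i) / c i with hQ
  have hwc : ∀ k, psiPow ψ (Finset.univ.erase k) * piTau l (Finset.univ.erase k) = Q * c k := by
    intro k
    have hsplit : Q = (piTau l (Finset.univ.erase k) / c k) *
        ∏ i ∈ Finset.univ.erase k, piTau l (Finset.univ.erase i) / c i :=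
      (Finset.mul_prod_erase _ _ (Finset.mem_univ k)).symm
    rw [hsplit, psiPow]
    have : piTau l (Finset.univ.erase k) / c k * c k = piTau l (Finset.univ.erase k) :=
      div_mul_cancel₀ _ (hc k).ne'
    calc (∏ i ∈ Finset.univ.erase k, ψ i) * piTau l (Finset.univ.erase k)
        = (piTau l (Finset.univ.erase k) / c k * c k) *
          ∏ i ∈ Finset.univ.erase k, piTau l (Finset.univ.erase i) / c i := by
          rw [this]; ring
      _ = _ := by ring
  have hPQ : (∑ k', psiPow ψ (Finset.univ.erase k') * piTau l (Finset.univ.erase k')) = Q := by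
    rw [Finset.sum_congr rfl fun k _ => hwc k, ← Finset.mul_sum, hc1, mul_one]
  have hQpos : 0 < Q := hPQ ▸ hP
  refine ⟨ψ, hψpos, ?_⟩
  rw [hrepr]
  refine Finset.sum_congr rfl fun k _ => ?_
  rw [hwc k, hPQ]
  congr 1
  field_simp
end
section
variable {n : ℕ}

lemma part2 (l : Fin (n+1) → ℝ) (hpos : ∀ i, 0 < l i) (hinj : Function.Injective l) :
    closure {x : Fin n → ℝ | ∃ ψ : Fin (n + 1) → ℝ,
        (∀ i, 0 ≤ ψ i) ∧ n ≤ suppCard ψ ∧ x = alphaMap l ψ n} =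
      convexHull ℝ (Set.range fun i : Fin (n + 1) =>
        alphaTau l n (Finset.univ.erase i) (erase_card i)) := by
  classical
  set f : Fin (n+1) → (Fin n → ℝ) :=
    fun i => alphaTau l n (Finset.univ.erase i) (erase_card i) with hf
  set S : Set (Fin n → ℝ) := {x | ∃ ψ : Fin (n + 1) → ℝ,
      (∀ i, 0 ≤ ψ i) ∧ n ≤ suppCard ψ ∧ x = alphaMap l ψ n} with hS
  apply Set.Subset.antisymm
  · -- closure S ⊆ hull
    refine closure_minimal ?_ ((Set.finite_range f).isClosed_convexHull ℝ)
    rintro x ⟨ψ, hψ, hsupp, rfl⟩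
    obtain ⟨hP, hrepr⟩ := repr_main l ψ hpos hinj hψ hsupp
    rw [hrepr]
    set w : Fin (n+1) → ℝ :=
      fun k => psiPow ψ (Finset.univ.erase k) * piTau l (Finset.univ.erase k) with hw
    have hcm : ∑ k, (w k / ∑ k', w k') • f k = Finset.univ.centerMass w f := by
      rw [Finset.centerMass, Finset.smul_sum]
      refine Finset.sum_congr rfl fun k _ => ?_
      rw [smul_smul, div_eq_inv_mul]
    rw [hcm]
    refine Finset.centerMass_mem_convexHull _ (fun k _ => ?_) hP (fun k _ => Set.mem_range_self k)
    exact mul_nonneg (Finset.prod_nonneg fun i _ => hψ i)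
      (piTau_erase_pos l hpos hinj k).le
  · -- hull ⊆ closure S
    intro x hx
    rw [convexHull_range_eq_exists_affineCombination] at hx
    obtain ⟨s, w, hw0, hw1, rfl⟩ := hx
    set c : Fin (n+1) → ℝ := fun i => if i ∈ s then w i else 0 with hc
    have hc0 : ∀ i, 0 ≤ c i := by
      intro i; rw [hc]; dsimp only
      split
      · exact hw0 i ‹_›
      · exact le_refl 0
    have hc1 : ∑ i, c i = 1 := by
      rw [hc]
      rw [Finset.sum_ite_mem, Finset.univ_inter, hw1]
    have hxc : s.affineCombination ℝ f w = ∑ i, c i • f i := by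
      rw [s.affineCombination_eq_linear_combination f w hw1, hc]
      simp only [ite_smul, zero_smul]
      rw [Finset.sum_ite_mem, Finset.univ_inter]
    rw [hxc]
    -- approximating sequence
    set d : ℕ → ℝ := fun j => ((j : ℝ) + 1)⁻¹ with hd
    have hdpos : ∀ j, 0 < d j := fun j => by positivity
    set Dn : ℕ → ℝ := fun j => 1 + (n + 1) * d j with hD
    have hDpos : ∀ j, 0 < Dn j := fun j => by
      have := hdpos j
      rw [hD]; positivity
    set cs : ℕ → Fin (n+1) → ℝ := fun j i => (c i + d j) / Dn j with hcs
    have hcspos : ∀ j i, 0 < cs j i := fun j i =>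
      div_pos (add_pos_of_nonneg_of_pos (hc0 i) (hdpos j)) (hDpos j)
    have hcssum : ∀ j, ∑ i, cs j i = 1 := by
      intro j
      rw [hcs]
      dsimp only
      rw [← Finset.sum_div, Finset.sum_add_distrib, hc1, Finset.sum_const, Finset.card_univ,
        Fintype.card_fin, nsmul_eq_mul]
      have h' : (0:ℝ) < 1 + ((n:ℝ) + 1) * d j := hDpos j
      rw [hD]
      push_cast
      rw [div_self h'.ne']
    -- membership
    have hmem : ∀ j, (∑ i, cs j i • f i) ∈ S := by
      intro j
      obtain ⟨ψ, hψpos, hψeq⟩ := part1 l hpos hinj (cs j) (hcspos j) (hcssum j)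
      refine ⟨ψ, fun i => (hψpos i).le, ?_, hψeq.symm⟩
      rw [suppCard_of_pos ψ hψpos]; omega
    -- convergence
    have htend : Filter.Tendsto (fun j => ∑ i, cs j i • f i) Filter.atTop
        (nhds (∑ i, c i • f i)) := by
      refine tendsto_finset_sum _ fun i _ => ?_
      have hd0 : Filter.Tendsto d Filter.atTop (nhds 0) := by
        rw [hd]
        have := tendsto_one_div_add_atTop_nhds_zero_nat (𝕜 := ℝ)
        simpa [one_div] using this
      have hnum : Filter.Tendsto (fun j => c i + d j) Filter.atTop (nhds (c i)) := by
        simpa using (tendsto_const_nhds.add hd0)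
      have hden : Filter.Tendsto Dn Filter.atTop (nhds 1) := by
        rw [hD]
        have : Filter.Tendsto (fun j => 1 + ((n:ℝ) + 1) * d j) Filter.atTop (nhds (1 + ((n:ℝ)+1) * 0)) :=
          tendsto_const_nhds.add (tendsto_const_nhds.mul hd0)
        simpa using this
      have := (hnum.div hden one_ne_zero).smul_const (f i)
      simpa [hcs] using this
    exact mem_closure_of_tendsto htend (Filter.Eventually.of_forall hmem)

end
end S4

theorem stmt4 {n : ℕ} (l : Fin (n + 1) → ℝ) (hpos : ∀ i, 0 < l i)
    (hanti : StrictAnti l) :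
    (∀ c : Fin (n + 1) → ℝ, (∀ i, 0 < c i) → ∑ i, c i = 1 →
        ∃ ψ : Fin (n + 1) → ℝ, (∀ i, 0 < ψ i) ∧
          alphaMap l ψ n =
            ∑ i, c i • alphaTau l n (Finset.univ.erase i)
              (by simp [Finset.card_erase_of_mem])) ∧
      closure {x : Fin n → ℝ | ∃ ψ : Fin (n + 1) → ℝ,
          (∀ i, 0 ≤ ψ i) ∧ n ≤ suppCard ψ ∧ x = alphaMap l ψ n} =
        convexHull ℝ (Set.range fun i : Fin (n + 1) =>
          alphaTau l n (Finset.univ.erase i) (by simp [Finset.card_erase_of_mem])) := by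
  constructor
  · intro c hc hc1
    obtain ⟨ψ, hψ, heq⟩ := S4.part1 l hpos hanti.injective c hc hc1
    exact ⟨ψ, hψ, heq⟩
  · exact S4.part2 l hpos hanti.injective
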